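/- arXiv:1806.04370 — 3 statements merged into one kernel-verified Lean document; each statement's English description precedes it below -/
import Mathlib

section
/- Let p be an odd prime and integers 1 ≤ b ≤ a. The group G = ⟨x, y ∣ x^(p^a) = y^(p^a) = z^(p^b) = [x,z] = [y,z] = 1, z = [x,y]⟩ has order p^(2a+b). -/
namespace Stmt16

/-! ### A concrete model of the group: `ZMod n × ZMod n × ZMod m` with a cocycle twist -/

@[ext] structure Mdl (n m : ℕ) where
  u : ZMod n
  v : ZMod n
  w : ZMod m

namespace Mdl

variable {n m : ℕ} [Fact (m ∣ n)]

/-- the natural cast `ZMod n → ZMod m` when `m ∣ n`. -/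
def cst (x : ZMod n) : ZMod m := ZMod.castHom (Fact.out : m ∣ n) (ZMod m) x

lemma cst_add (x y : ZMod n) : (cst (x + y) : ZMod m) = cst x + cst y := map_add _ _ _
lemma cst_zero : (cst (0 : ZMod n) : ZMod m) = 0 := map_zero _
lemma cst_neg (x : ZMod n) : (cst (-x) : ZMod m) = - cst x := map_neg _ _
lemma cst_one : (cst (1 : ZMod n) : ZMod m) = 1 := map_one _

lemma cst_eq [NeZero n] (t : ZMod n) : (cst t : ZMod m) = ((t.val : ℕ) : ZMod m) := by
  rw [cst, ZMod.castHom_apply, ZMod.natCast_val]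

instance : Mul (Mdl n m) :=
  ⟨fun g h => ⟨g.u + h.u, g.v + h.v, g.w + h.w + cst g.v * cst h.u⟩⟩
instance : One (Mdl n m) := ⟨⟨0, 0, 0⟩⟩
instance : Inv (Mdl n m) :=
  ⟨fun g => ⟨-g.u, -g.v, -g.w + cst g.v * cst g.u⟩⟩

lemma mul_def (g h : Mdl n m) :
    g * h = ⟨g.u + h.u, g.v + h.v, g.w + h.w + cst g.v * cst h.u⟩ := rfl
omit [Fact (m ∣ n)] in
lemma one_def : (1 : Mdl n m) = ⟨0, 0, 0⟩ := rfl
lemma inv_def (g : Mdl n m) : g⁻¹ = ⟨-g.u, -g.v, -g.w + cst g.v * cst g.u⟩ := rfl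

instance : Group (Mdl n m) :=
  Group.ofLeftAxioms
    (fun g h k => by
      simp only [mul_def, cst_add]
      ext <;> ring)
    (fun g => by simp [mul_def, one_def, cst_zero])
    (fun g => by simp [mul_def, inv_def, one_def, cst_neg])

def X : Mdl n m := ⟨1, 0, 0⟩
def Y : Mdl n m := ⟨0, 1, 0⟩
def C : Mdl n m := ⟨0, 0, 1⟩

lemma X_pow (t : ℕ) : (X ^ t : Mdl n m) = ⟨(t : ZMod n), 0, 0⟩ := by
  induction t with
  | zero => simp [one_def]
  | succ t ih => rw [pow_succ, ih]; simp [mul_def, X, cst_zero]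

lemma Y_pow (t : ℕ) : (Y ^ t : Mdl n m) = ⟨0, (t : ZMod n), 0⟩ := by
  induction t with
  | zero => simp [one_def]
  | succ t ih => rw [pow_succ, ih]; simp [mul_def, Y, cst_zero]

lemma C_pow (t : ℕ) : (C ^ t : Mdl n m) = ⟨0, 0, (t : ZMod m)⟩ := by
  induction t with
  | zero => simp [one_def]
  | succ t ih => rw [pow_succ, ih]; simp [mul_def, C, cst_zero]

lemma X_pow_card : (X ^ n : Mdl n m) = 1 := by
  rw [X_pow, ZMod.natCast_self, one_def]

lemma Y_pow_card : (Y ^ n : Mdl n m) = 1 := by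
  rw [Y_pow, ZMod.natCast_self, one_def]

lemma C_pow_card : (C ^ m : Mdl n m) = 1 := by
  rw [C_pow, ZMod.natCast_self, one_def]

lemma C_central (g : Mdl n m) : C * g = g * C := by
  simp [mul_def, C, cst_zero]; ring

lemma commXY : (X⁻¹ * Y⁻¹ * X * Y : Mdl n m) = C⁻¹ := by
  simp [mul_def, inv_def, X, Y, C, cst_zero, cst_neg, cst_one]

lemma comm_C (g : Mdl n m) : g⁻¹ * (C⁻¹)⁻¹ * g * C⁻¹ = 1 := by
  calc g⁻¹ * (C⁻¹)⁻¹ * g * C⁻¹ = g⁻¹ * (C * g) * C⁻¹ := by group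
    _ = g⁻¹ * (g * C) * C⁻¹ := by rw [C_central]
    _ = 1 := by group

lemma XYC [NeZero n] [NeZero m] (g : Mdl n m) :
    (X : Mdl n m) ^ g.u.val * Y ^ g.v.val * C ^ g.w.val = g := by
  rw [X_pow, Y_pow, C_pow]
  ext <;> simp [mul_def, cst_zero, ZMod.natCast_val, ZMod.cast_id]

def equivProd : Mdl n m ≃ ZMod n × ZMod n × ZMod m where
  toFun g := (g.u, g.v, g.w)
  invFun t := ⟨t.1, t.2.1, t.2.2⟩
  left_inv _ := rfl
  right_inv _ := rfl

omit [Fact (m ∣ n)] in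
lemma card : Nat.card (Mdl n m) = n * n * m := by
  rw [Nat.card_congr (equivProd (n := n) (m := m))]
  simp [Nat.card_prod, Nat.card_zmod]
  ring

end Mdl

/-! ### Normal-form computations in an abstract group -/

variable {G : Type*} [Group G]

lemma swap_one (x y c : G) (hcx : Commute c x)
    (hswap : y * x = x * y * c) (i : ℕ) :
    y * x ^ i = x ^ i * y * c ^ i := by
  induction i with
  | zero => simp
  | succ i ih =>
    calc y * x ^ (i + 1) = (y * x ^ i) * x := by rw [pow_succ]; group
    _ = x ^ i * y * (c ^ i * x) := by rw [ih]; group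
    _ = x ^ i * y * (x * c ^ i) := by rw [(hcx.pow_left i).eq]
    _ = x ^ i * (y * x) * c ^ i := by group
    _ = x ^ i * (x * y * c) * c ^ i := by rw [hswap]
    _ = x ^ (i + 1) * y * c ^ (i + 1) := by rw [pow_succ, pow_succ']; group

lemma swap_pow (x y c : G) (hcx : Commute c x) (hcy : Commute c y)
    (hswap : y * x = x * y * c) (j i : ℕ) :
    y ^ j * x ^ i = x ^ i * y ^ j * c ^ (j * i) := by
  induction j with
  | zero => simp
  | succ j ih =>
    calc y ^ (j + 1) * x ^ i = y ^ j * (y * x ^ i) := by rw [pow_succ]; group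
    _ = y ^ j * (x ^ i * y * c ^ i) := by rw [swap_one x y c hcx hswap]
    _ = (y ^ j * x ^ i) * y * c ^ i := by group
    _ = x ^ i * y ^ j * (c ^ (j * i) * y) * c ^ i := by rw [ih]; group
    _ = x ^ i * y ^ j * (y * c ^ (j * i)) * c ^ i := by rw [(hcy.pow_left (j * i)).eq]
    _ = x ^ i * y ^ (j + 1) * c ^ (j * i + i) := by rw [pow_succ, pow_add]; group
    _ = x ^ i * y ^ (j + 1) * c ^ ((j + 1) * i) := by ring_nf

lemma prod_form (x y c : G) (hcx : Commute c x) (hcy : Commute c y)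
    (hswap : y * x = x * y * c) (A B C A' B' C' : ℕ) :
    (x ^ A * y ^ B * c ^ C) * (x ^ A' * y ^ B' * c ^ C') =
      x ^ (A + A') * y ^ (B + B') * c ^ (C + C' + B * A') := by
  calc (x ^ A * y ^ B * c ^ C) * (x ^ A' * y ^ B' * c ^ C')
      = x ^ A * y ^ B * (c ^ C * x ^ A') * y ^ B' * c ^ C' := by group
    _ = x ^ A * y ^ B * (x ^ A' * c ^ C) * y ^ B' * c ^ C' := by
        rw [(hcx.pow_pow C A').eq]
    _ = x ^ A * (y ^ B * x ^ A') * (c ^ C * y ^ B') * c ^ C' := by group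
    _ = x ^ A * (y ^ B * x ^ A') * (y ^ B' * c ^ C) * c ^ C' := by
        rw [(hcy.pow_pow C B').eq]
    _ = x ^ A * (x ^ A' * y ^ B * c ^ (B * A')) * (y ^ B' * c ^ C) * c ^ C' := by
        rw [swap_pow x y c hcx hcy hswap]
    _ = x ^ (A + A') * y ^ B * (c ^ (B * A') * y ^ B') * (c ^ C * c ^ C') := by
        rw [pow_add]; group
    _ = x ^ (A + A') * y ^ B * (y ^ B' * c ^ (B * A')) * (c ^ C * c ^ C') := by
        rw [(hcy.pow_pow (B * A') B').eq]
    _ = x ^ (A + A') * y ^ (B + B') * c ^ (C + C' + B * A') := by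
        rw [pow_add, pow_add, pow_add]; group

end Stmt16

/-- For an odd prime `p` and `1 ≤ b ≤ a`, the group
`⟨x, y ∣ x^(p^a) = y^(p^a) = z^(p^b) = [x,z] = [y,z] = 1, z := [x,y]⟩`
has order `p^(2a+b)`. -/
theorem stmt_16 (p a b : ℕ) (hp : p.Prime) (hodd : Odd p)
    (hb : 1 ≤ b) (hba : b ≤ a) :
    ∀ X Y Z : FreeGroup (Fin 2), X = FreeGroup.of 0 → Y = FreeGroup.of 1 →
      Z = X⁻¹ * Y⁻¹ * X * Y →
      Nat.card (PresentedGroup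
        ({X ^ p ^ a, Y ^ p ^ a, Z ^ p ^ b,
          X⁻¹ * Z⁻¹ * X * Z, Y⁻¹ * Z⁻¹ * Y * Z} : Set (FreeGroup (Fin 2)))) =
        p ^ (2 * a + b) := by
  intro X Y Z hX hY hZ
  subst hX hY hZ
  set n := p ^ a with hn
  set m := p ^ b with hm
  haveI : Fact (m ∣ n) := ⟨pow_dvd_pow p hba⟩
  haveI : NeZero n := ⟨pow_ne_zero _ hp.pos.ne'⟩
  haveI : NeZero m := ⟨pow_ne_zero _ hp.pos.ne'⟩
  have hn1 : 1 < n := Nat.one_lt_pow (by omega) hp.one_lt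
  set rels : Set (FreeGroup (Fin 2)) :=
    {FreeGroup.of 0 ^ n, FreeGroup.of 1 ^ n,
      ((FreeGroup.of 0)⁻¹ * (FreeGroup.of 1)⁻¹ * FreeGroup.of 0 * FreeGroup.of 1) ^ m,
      (FreeGroup.of 0)⁻¹ *
        ((FreeGroup.of 0)⁻¹ * (FreeGroup.of 1)⁻¹ * FreeGroup.of 0 * FreeGroup.of 1)⁻¹ *
        FreeGroup.of 0 *
        ((FreeGroup.of 0)⁻¹ * (FreeGroup.of 1)⁻¹ * FreeGroup.of 0 * FreeGroup.of 1),
      (FreeGroup.of 1)⁻¹ *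
        ((FreeGroup.of 0)⁻¹ * (FreeGroup.of 1)⁻¹ * FreeGroup.of 0 * FreeGroup.of 1)⁻¹ *
        FreeGroup.of 1 *
        ((FreeGroup.of 0)⁻¹ * (FreeGroup.of 1)⁻¹ * FreeGroup.of 0 * FreeGroup.of 1)} with hrels
  show Nat.card (PresentedGroup rels) = p ^ (2 * a + b)
  -- the homomorphism to the concrete model
  set f : Fin 2 → Stmt16.Mdl n m := ![Stmt16.Mdl.X, Stmt16.Mdl.Y] with hf
  have hf0 : f 0 = Stmt16.Mdl.X := rfl
  have hf1 : f 1 = Stmt16.Mdl.Y := rfl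
  have hrel : ∀ r ∈ rels, FreeGroup.lift f r = 1 := by
    intro r hr
    simp only [hrels, Set.mem_insert_iff, Set.mem_singleton_iff] at hr
    rcases hr with rfl | rfl | rfl | rfl | rfl
    · simp only [map_pow, FreeGroup.lift_apply_of, hf0]
      exact Stmt16.Mdl.X_pow_card
    · simp only [map_pow, FreeGroup.lift_apply_of, hf1]
      exact Stmt16.Mdl.Y_pow_card
    · simp only [map_pow, map_mul, map_inv, FreeGroup.lift_apply_of, hf0, hf1, Stmt16.Mdl.commXY,
        inv_pow, Stmt16.Mdl.C_pow_card, inv_one]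
    · simp only [map_mul, map_inv, FreeGroup.lift_apply_of, hf0, hf1, Stmt16.Mdl.commXY]
      exact Stmt16.Mdl.comm_C _
    · simp only [map_mul, map_inv, FreeGroup.lift_apply_of, hf0, hf1, Stmt16.Mdl.commXY]
      exact Stmt16.Mdl.comm_C _
  set Φ : PresentedGroup rels →* Stmt16.Mdl n m := PresentedGroup.toGroup hrel with hΦ
  -- generators of the presented group
  set xg : PresentedGroup rels := PresentedGroup.of 0 with hxg
  set yg : PresentedGroup rels := PresentedGroup.of 1 with hyg
  set zg : PresentedGroup rels := xg⁻¹ * yg⁻¹ * xg * yg with hzg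
  have relg : ∀ r ∈ rels, PresentedGroup.mk rels r = 1 := fun r hr =>
    (QuotientGroup.eq_one_iff _).mpr (Subgroup.subset_normalClosure hr)
  have hx : xg ^ n = 1 := by
    have := relg _ (Set.mem_insert _ _)
    rwa [map_pow] at this
  have hy : yg ^ n = 1 := by
    have := relg _ (Set.mem_insert_of_mem _ (Set.mem_insert _ _))
    rwa [map_pow] at this
  have hz : zg ^ m = 1 := by
    have := relg _ (Set.mem_insert_of_mem _ (Set.mem_insert_of_mem _ (Set.mem_insert _ _)))
    rwa [map_pow, map_mul, map_mul, map_mul, map_inv, map_inv] at this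
  have hzx : xg⁻¹ * zg⁻¹ * xg * zg = 1 := by
    have := relg _ (Set.mem_insert_of_mem _ (Set.mem_insert_of_mem _
      (Set.mem_insert_of_mem _ (Set.mem_insert _ _))))
    simp only [map_mul, map_inv] at this
    exact this
  have hzy : yg⁻¹ * zg⁻¹ * yg * zg = 1 := by
    have := relg _ (Set.mem_insert_of_mem _ (Set.mem_insert_of_mem _
      (Set.mem_insert_of_mem _ (Set.mem_insert_of_mem _ (Set.mem_singleton _)))))
    simp only [map_mul, map_inv] at this
    exact this
  -- set c := zg⁻¹ : the basic central element
  set c : PresentedGroup rels := zg⁻¹ with hc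
  have hcx : Commute c xg := by
    have h2 : zg * xg * (xg⁻¹ * zg⁻¹ * xg * zg) = xg * zg := by group
    rw [hzx, mul_one] at h2
    have h3 : Commute zg xg := h2
    exact h3.inv_left
  have hcy : Commute c yg := by
    have h2 : zg * yg * (yg⁻¹ * zg⁻¹ * yg * zg) = yg * zg := by group
    rw [hzy, mul_one] at h2
    have h3 : Commute zg yg := h2
    exact h3.inv_left
  have hswap : yg * xg = xg * yg * c := by rw [hc, hzg]; group
  have hcm : c ^ m = 1 := by rw [hc, inv_pow, hz, inv_one]
  -- the inverse map
  have px : ∀ t : ℕ, xg ^ ((t : ZMod n)).val = xg ^ t := fun t => by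
    rw [ZMod.val_natCast, ← pow_eq_pow_mod t hx]
  have py : ∀ t : ℕ, yg ^ ((t : ZMod n)).val = yg ^ t := fun t => by
    rw [ZMod.val_natCast, ← pow_eq_pow_mod t hy]
  have pc : ∀ t : ℕ, c ^ ((t : ZMod m)).val = c ^ t := fun t => by
    rw [ZMod.val_natCast, ← pow_eq_pow_mod t hcm]
  have cast_val_n : ∀ t : ZMod n, ((t.val : ℕ) : ZMod n) = t := fun t => by
    simp [ZMod.natCast_val, ZMod.cast_id]
  have cast_val_m : ∀ t : ZMod m, ((t.val : ℕ) : ZMod m) = t := fun t => by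
    simp [ZMod.natCast_val, ZMod.cast_id]
  set ψ : Stmt16.Mdl n m → PresentedGroup rels :=
    fun g => xg ^ g.u.val * yg ^ g.v.val * c ^ g.w.val with hψ
  have ψmul : ∀ g h : Stmt16.Mdl n m, ψ (g * h) = ψ g * ψ h := by
    intro g h
    rw [hψ]
    dsimp only
    rw [Stmt16.prod_form xg yg c hcx hcy hswap, Stmt16.Mdl.mul_def]
    dsimp only
    have e1 : (g.u + h.u : ZMod n) = ((g.u.val + h.u.val : ℕ) : ZMod n) := by
      push_cast [cast_val_n]; ring
    have e2 : (g.v + h.v : ZMod n) = ((g.v.val + h.v.val : ℕ) : ZMod n) := by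
      push_cast [cast_val_n]; ring
    have e3 : (g.w + h.w + Stmt16.Mdl.cst g.v * Stmt16.Mdl.cst h.u : ZMod m) =
        ((g.w.val + h.w.val + g.v.val * h.u.val : ℕ) : ZMod m) := by
      rw [Stmt16.Mdl.cst_eq, Stmt16.Mdl.cst_eq]
      push_cast [cast_val_m]; ring
    rw [e1, e2, e3, px, py, pc]
  set Ψ : Stmt16.Mdl n m →* PresentedGroup rels := MonoidHom.mk' ψ ψmul with hΨ
  -- Φ after Ψ is the identity
  have Φx : Φ xg = Stmt16.Mdl.X := by
    rw [hΦ, hxg]; exact PresentedGroup.toGroup.of hrel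
  have Φy : Φ yg = Stmt16.Mdl.Y := by
    rw [hΦ, hyg]; exact PresentedGroup.toGroup.of hrel
  have Φc : Φ c = Stmt16.Mdl.C := by
    rw [hc, hzg, map_inv, map_mul, map_mul, map_mul, map_inv, map_inv, Φx, Φy,
      Stmt16.Mdl.commXY, inv_inv]
  have hΦΨ : ∀ g : Stmt16.Mdl n m, Φ (Ψ g) = g := by
    intro g
    show Φ (ψ g) = g
    rw [hψ]
    dsimp only
    rw [map_mul, map_mul, map_pow, map_pow, map_pow, Φx, Φy, Φc]
    exact Stmt16.Mdl.XYC g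
  have hΨΦ : ∀ g : PresentedGroup rels, Ψ (Φ g) = g := by
    have : Ψ.comp Φ = MonoidHom.id (PresentedGroup rels) := by
      apply PresentedGroup.ext
      intro i
      fin_cases i
      · show Ψ (Φ xg) = xg
        rw [Φx]
        show ψ Stmt16.Mdl.X = xg
        rw [hψ]
        simp [Stmt16.Mdl.X, ZMod.val_one_eq_one_mod, Nat.mod_eq_of_lt hn1]
      · show Ψ (Φ yg) = yg
        rw [Φy]
        show ψ Stmt16.Mdl.Y = yg
        rw [hψ]
        simp [Stmt16.Mdl.Y, ZMod.val_one_eq_one_mod, Nat.mod_eq_of_lt hn1]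
    intro g
    exact DFunLike.congr_fun this g
  have : Nat.card (PresentedGroup rels) = Nat.card (Stmt16.Mdl n m) :=
    Nat.card_congr ⟨Φ, Ψ, hΨΦ, hΦΨ⟩
  rw [this, Stmt16.Mdl.card, hn, hm, ← pow_add, ← pow_add]
  congr 1
  omega
end

section
/- Let p be an odd prime, 1 ≤ b ≤ a, and G = ⟨x, y ∣ x^(p^a) = y^(p^a) = z^(p^b) = [x,z] = [y,z] = 1, z := [x,y]⟩. If x₁ = x^i y^j z^k and y₁ = x^r y^s z^t with is − jr ≢ 0 (mod p), then the pair (x₁, y₁) generates G, the commutator [x₁, y₁] equals z^(is−jr) and has order p^b, and x₁ and y₁ each have order p^a. -/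
section Core
variable {G : Type*} [Group G] (x y z : G)
variable (hz : z = x⁻¹ * y⁻¹ * x * y) (hzx : Commute z x) (hzy : Commute z y)

private lemma st17.hconj (a g : G) (M : ℤ) : (a * g * a⁻¹) ^ M = a * g ^ M * a⁻¹ := conj_zpow

set_option linter.unusedSectionVars false

include hz hzx hzy

private lemma st17.lemB (M : ℤ) : y⁻¹ * x ^ M * y = x ^ M * z ^ M := by
  have h1 : y⁻¹ * x * y = x * z := by rw [hz]; group
  have h2 : (y⁻¹ * x * y) ^ M = y⁻¹ * x ^ M * y := by
    simpa using st17.hconj y⁻¹ x M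
  rw [← h2, h1, (hzx.symm.mul_zpow M)]

private lemma st17.lemC (I : ℤ) : x ^ (-I) * y * x ^ I = y * z ^ (-I) := by
  have hb := st17.lemB x y z hz hzx hzy (-I)
  have h : x ^ (-I) * y * x ^ I = y * (y⁻¹ * x ^ (-I) * y) * x ^ I := by group
  rw [h, hb]
  have hc : z ^ (-I) * x ^ I = x ^ I * z ^ (-I) := (hzx.zpow_zpow (-I) I).eq
  rw [mul_assoc, mul_assoc, hc]
  group

private lemma st17.lemL2 (I J : ℤ) : y ^ J * x ^ I = x ^ I * y ^ J * z ^ (-(I*J)) := by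
  have hc := st17.lemC x y z hz hzx hzy I
  have h2 : (x ^ (-I) * y * x ^ I) ^ J = x ^ (-I) * y ^ J * x ^ I := by
    have := st17.hconj (x ^ (-I)) y J
    simpa [zpow_neg] using this
  have h3 : (y * z ^ (-I)) ^ J = y ^ J * z ^ (-I*J) := by
    rw [(hzy.symm.zpow_right (-I)).mul_zpow, ← zpow_mul]
  have h : y ^ J * x ^ I = x ^ I * (x ^ (-I) * y ^ J * x ^ I) := by group
  rw [h, ← h2, hc, h3, neg_mul, ← mul_assoc]

private lemma st17.mulForm (I J K I' J' K' : ℤ) :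
    (x ^ I * y ^ J * z ^ K) * (x ^ I' * y ^ J' * z ^ K') =
      x ^ (I + I') * y ^ (J + J') * z ^ (K + K' - J * I') := by
  have pw : ∀ (g : G) (m n : ℤ) (w : G), g ^ m * (g ^ n * w) = g ^ (m+n) * w := by
    intros; rw [← mul_assoc, ← zpow_add]
  have hZX : ∀ (E F : ℤ) (w : G), z ^ E * (x ^ F * w) = x ^ F * (z ^ E * w) := by
    intro E F w; rw [← mul_assoc, (hzx.zpow_zpow E F).eq, mul_assoc]
  have hZY : ∀ (E F : ℤ) (w : G), z ^ E * (y ^ F * w) = y ^ F * (z ^ E * w) := by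
    intro E F w; rw [← mul_assoc, (hzy.zpow_zpow E F).eq, mul_assoc]
  have h2 : ∀ w : G, y ^ J * (x ^ I' * w) = x ^ I' * (y ^ J * (z ^ (-(I'*J)) * w)) := by
    intro w
    rw [← mul_assoc, st17.lemL2 x y z hz hzx hzy I' J, mul_assoc, mul_assoc]
  have he : -(I'*J) + K + K' = K + K' - J * I' := by ring
  simp only [mul_assoc]
  rw [hZX K I', hZY K J', h2, hZY (-(I'*J)) J', pw x, pw y, pw z, ← zpow_add, he,
    ← mul_assoc]

private lemma st17.invForm (I J K : ℤ) :
    (x ^ I * y ^ J * z ^ K)⁻¹ = x ^ (-I) * y ^ (-J) * z ^ (-K - I*J) := by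
  apply inv_eq_of_mul_eq_one_right
  rw [st17.mulForm x y z hz hzx hzy]
  have e1 : I + -I = 0 := by ring
  have e2 : J + -J = 0 := by ring
  have e3 : K + (-K - I*J) - J * (-I) = 0 := by ring
  rw [e1, e2, e3]
  simp

private lemma st17.npowForm (I J K : ℤ) (N : ℕ) :
    (x ^ I * y ^ J * z ^ K) ^ N =
      x ^ (I * N) * y ^ (J * N) * z ^ (K * N - I * J * (N.choose 2 : ℤ)) := by
  induction N with
  | zero => simp
  | succ N ih =>
      rw [pow_succ, ih, st17.mulForm x y z hz hzx hzy]
      have e1 : I * (N:ℤ) + I = I * ((N:ℕ)+1 : ℕ) := by push_cast; ring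
      have e2 : J * (N:ℤ) + J = J * ((N:ℕ)+1 : ℕ) := by push_cast; ring
      have e3 : (K * N - I * J * (N.choose 2 : ℤ)) + K - (J * N) * I
          = K * ((N:ℕ)+1 : ℕ) - I * J * (((N+1).choose 2 : ℕ) : ℤ) := by
        rw [Nat.choose_succ_succ]
        push_cast [Nat.choose_one_right]
        ring
      rw [e1, e2, e3]

private lemma st17.zpowForm (I J K : ℤ) (M : ℤ) :
    ∃ K' : ℤ, (x ^ I * y ^ J * z ^ K) ^ M = x ^ (I * M) * y ^ (J * M) * z ^ K' := by
  induction M using Int.induction_on with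
  | zero => exact ⟨0, by simp⟩
  | succ M ih =>
      obtain ⟨K', hK'⟩ := ih
      refine ⟨K' + K - (J * M) * I, ?_⟩
      rw [zpow_add, zpow_one, hK', st17.mulForm x y z hz hzx hzy]
      have e1 : I * (M:ℤ) + I = I * ((M:ℤ)+1) := by ring
      have e2 : J * (M:ℤ) + J = J * ((M:ℤ)+1) := by ring
      rw [e1, e2]
  | pred M ih =>
      obtain ⟨K', hK'⟩ := ih
      refine ⟨K' + (-K - I*J) - (J * (-(M:ℤ))) * (-I), ?_⟩
      rw [sub_eq_add_neg, zpow_add, hK', zpow_neg_one,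
        st17.invForm x y z hz hzx hzy, st17.mulForm x y z hz hzx hzy]
      have e1 : I * (-(M:ℤ)) + -I = I * (-(M:ℤ) + -1) := by ring
      have e2 : J * (-(M:ℤ)) + -J = J * (-(M:ℤ) + -1) := by ring
      rw [e1, e2]

end Core

@[ext]
structure Heis (n m : ℕ) : Type where
  a : ZMod n
  b : ZMod n
  c : ZMod m

namespace Heis

set_option linter.unusedSectionVars false

variable {n m : ℕ} [Fact (m ∣ n)]

def cst (u : ZMod n) : ZMod m := ZMod.castHom (Fact.out : m ∣ n) (ZMod m) u

@[simp] lemma cst_add (u v : ZMod n) : cst (u + v) = (cst u + cst v : ZMod m) :=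
  map_add (ZMod.castHom (Fact.out : m ∣ n) (ZMod m)) u v
@[simp] lemma cst_zero : cst (0 : ZMod n) = (0 : ZMod m) :=
  map_zero (ZMod.castHom (Fact.out : m ∣ n) (ZMod m))
@[simp] lemma cst_one : cst (1 : ZMod n) = (1 : ZMod m) :=
  map_one (ZMod.castHom (Fact.out : m ∣ n) (ZMod m))
@[simp] lemma cst_nsmul (N : ℕ) (u : ZMod n) : cst (N • u) = N • (cst u : ZMod m) :=
  map_nsmul (ZMod.castHom (Fact.out : m ∣ n) (ZMod m)) N u
@[simp] lemma cst_natCast_mul (N : ℕ) (u : ZMod n) :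
    cst ((N : ZMod n) * u) = (N : ZMod m) * cst u := by
  simpa [cst] using map_mul (ZMod.castHom (Fact.out : m ∣ n) (ZMod m)) (N : ZMod n) u
@[simp] lemma cst_neg (u : ZMod n) : cst (-u) = (-(cst u) : ZMod m) :=
  map_neg (ZMod.castHom (Fact.out : m ∣ n) (ZMod m)) u

instance : Mul (Heis n m) := ⟨fun A B => ⟨A.a + B.a, A.b + B.b, A.c + B.c + cst A.a * cst B.b⟩⟩
instance : One (Heis n m) := ⟨⟨0, 0, 0⟩⟩
instance : Inv (Heis n m) := ⟨fun A => ⟨-A.a, -A.b, -A.c + cst A.a * cst A.b⟩⟩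

@[simp] lemma mul_a (A B : Heis n m) : (A * B).a = A.a + B.a := rfl
@[simp] lemma mul_b (A B : Heis n m) : (A * B).b = A.b + B.b := rfl
@[simp] lemma mul_c (A B : Heis n m) : (A * B).c = A.c + B.c + cst A.a * cst B.b := rfl
@[simp] lemma one_a : (1 : Heis n m).a = 0 := rfl
@[simp] lemma one_b : (1 : Heis n m).b = 0 := rfl
@[simp] lemma one_c : (1 : Heis n m).c = 0 := rfl
@[simp] lemma inv_a (A : Heis n m) : (A⁻¹).a = -A.a := rfl
@[simp] lemma inv_b (A : Heis n m) : (A⁻¹).b = -A.b := rfl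
@[simp] lemma inv_c (A : Heis n m) : (A⁻¹).c = -A.c + cst A.a * cst A.b := rfl

instance : Group (Heis n m) where
  mul_assoc A B C := by ext <;> simp <;> ring
  one_mul A := by ext <;> simp
  mul_one A := by ext <;> simp
  inv_mul_cancel A := by ext <;> simp <;> ring

def X : Heis n m := ⟨1, 0, 0⟩
def Y : Heis n m := ⟨0, 1, 0⟩
def Z : Heis n m := ⟨0, 0, 1⟩

lemma pow_def (A : Heis n m) (N : ℕ) :
    A ^ N = ⟨N • A.a, N • A.b, N • A.c + (N.choose 2) • (cst A.a * cst A.b)⟩ := by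
  induction N with
  | zero => ext <;> simp
  | succ N ih =>
      rw [pow_succ, ih]
      ext <;> simp [add_nsmul, Nat.choose_succ_succ, Nat.choose_one_right, smul_smul,
        nsmul_eq_mul] <;> push_cast <;> ring

lemma comm_XY : X⁻¹ * Y⁻¹ * X * Y = (Z : Heis n m) := by
  ext <;> simp [X, Y, Z] <;> ring

lemma X_pow : (X : Heis n m) ^ n = 1 := by
  ext <;> simp [pow_def, X, nsmul_eq_mul, ZMod.natCast_self]

lemma Y_pow : (Y : Heis n m) ^ n = 1 := by
  ext <;> simp [pow_def, Y, nsmul_eq_mul, ZMod.natCast_self]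

lemma Z_pow : (Z : Heis n m) ^ m = 1 := by
  ext <;> simp [pow_def, Z, nsmul_eq_mul, ZMod.natCast_self]

lemma relc1 : X⁻¹ * Z⁻¹ * X * Z = (1 : Heis n m) := by
  ext <;> simp [X, Z] <;> ring

lemma relc2 : Y⁻¹ * Z⁻¹ * Y * Z = (1 : Heis n m) := by
  ext <;> simp [Y, Z] <;> ring

/-- first coordinate hom -/
def π₁ : Heis n m →* Multiplicative (ZMod n) where
  toFun A := Multiplicative.ofAdd A.a
  map_one' := rfl
  map_mul' _ _ := rfl

def π₂ : Heis n m →* Multiplicative (ZMod n) where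
  toFun A := Multiplicative.ofAdd A.b
  map_one' := rfl
  map_mul' _ _ := rfl

/-- center embedding -/
def ι : Multiplicative (ZMod m) →* Heis n m where
  toFun w := ⟨0, 0, w.toAdd⟩
  map_one' := by ext <;> simp
  map_mul' u v := by ext <;> simp

lemma Z_eq : (Z : Heis n m) = ι (Multiplicative.ofAdd 1) := rfl

end Heis

private lemma st17.zmod_dvd (M N : ℕ) (i : ℤ) (h : (N : ℕ) • ((i : ZMod M)) = 0) :
    (M : ℤ) ∣ N * i := by
  rw [nsmul_eq_mul] at h
  have h2 : (((N : ℤ) * i : ℤ) : ZMod M) = 0 := by push_cast; exact h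
  exact (ZMod.intCast_zmod_eq_zero_iff_dvd _ M).mp h2

/-- In the presented group
`G = ⟨x, y ∣ x^(p^a) = y^(p^a) = z^(p^b) = [x,z] = [y,z] = 1, z := [x,y]⟩`
(`p` an odd prime, `1 ≤ b ≤ a`), if `x₁ = x^i y^j z^k`, `y₁ = x^r y^s z^t` with
`is - jr ≢ 0 (mod p)`, then `(x₁, y₁)` generates `G`, `[x₁,y₁] = z^(is-jr)` has
order `p^b`, and `x₁`, `y₁` each have order `p^a`. -/
theorem stmt_17 (p a b : ℕ) (hp : p.Prime) (hodd : Odd p)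
    (hb : 1 ≤ b) (hba : b ≤ a)
    (rels : Set (FreeGroup (Fin 2)))
    (hrels : rels =
      {FreeGroup.of 0 ^ p ^ a, FreeGroup.of 1 ^ p ^ a,
       ((FreeGroup.of 0)⁻¹ * (FreeGroup.of 1)⁻¹ * FreeGroup.of 0 * FreeGroup.of 1) ^ p ^ b,
       (FreeGroup.of 0)⁻¹ *
         ((FreeGroup.of 0)⁻¹ * (FreeGroup.of 1)⁻¹ * FreeGroup.of 0 * FreeGroup.of 1)⁻¹ *
         FreeGroup.of 0 *
         ((FreeGroup.of 0)⁻¹ * (FreeGroup.of 1)⁻¹ * FreeGroup.of 0 * FreeGroup.of 1),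
       (FreeGroup.of 1)⁻¹ *
         ((FreeGroup.of 0)⁻¹ * (FreeGroup.of 1)⁻¹ * FreeGroup.of 0 * FreeGroup.of 1)⁻¹ *
         FreeGroup.of 1 *
         ((FreeGroup.of 0)⁻¹ * (FreeGroup.of 1)⁻¹ * FreeGroup.of 0 * FreeGroup.of 1)})
    (i j k r s t : ℤ) (hdet : ¬ ((p : ℤ) ∣ (i * s - j * r))) :
    ∀ x y z x₁ y₁ : PresentedGroup rels,
      x = PresentedGroup.of 0 → y = PresentedGroup.of 1 →
      z = x⁻¹ * y⁻¹ * x * y →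
      x₁ = x ^ i * y ^ j * z ^ k → y₁ = x ^ r * y ^ s * z ^ t →
      Subgroup.closure ({x₁, y₁} : Set (PresentedGroup rels)) = ⊤ ∧
        x₁⁻¹ * y₁⁻¹ * x₁ * y₁ = z ^ (i * s - j * r) ∧
        orderOf (x₁⁻¹ * y₁⁻¹ * x₁ * y₁) = p ^ b ∧
        orderOf x₁ = p ^ a ∧ orderOf y₁ = p ^ a := by
  intro x y z x₁ y₁ hx hy hzdef hx1 hy1
  haveI : Fact ((p ^ b) ∣ (p ^ a)) := ⟨pow_dvd_pow p hba⟩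
  set d : ℤ := i * s - j * r with hd
  -- images of relators are 1
  have hrel : ∀ w ∈ rels, PresentedGroup.mk rels w = 1 := fun w hw =>
    (QuotientGroup.eq_one_iff w).mpr (Subgroup.subset_normalClosure hw)
  have hxmk : x = PresentedGroup.mk rels (FreeGroup.of 0) := hx
  have hymk : y = PresentedGroup.mk rels (FreeGroup.of 1) := hy
  have hzmk : z = PresentedGroup.mk rels
      ((FreeGroup.of 0)⁻¹ * (FreeGroup.of 1)⁻¹ * FreeGroup.of 0 * FreeGroup.of 1) := by
    rw [hzdef, hxmk, hymk]; simp [map_mul, map_inv]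
  have hxa : x ^ (p ^ a) = 1 := by
    rw [hxmk, ← map_pow]
    exact hrel _ (by rw [hrels]; left; rfl)
  have hya : y ^ (p ^ a) = 1 := by
    rw [hymk, ← map_pow]
    exact hrel _ (by rw [hrels]; right; left; rfl)
  have hzb : z ^ (p ^ b) = 1 := by
    rw [hzmk, ← map_pow]
    exact hrel _ (by rw [hrels]; right; right; left; rfl)
  have hzx : Commute z x := by
    have h1 : x⁻¹ * z⁻¹ * x * z = 1 := by
      rw [hxmk, hzmk]
      rw [show (PresentedGroup.mk rels (FreeGroup.of 0))⁻¹ *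
          (PresentedGroup.mk rels ((FreeGroup.of 0)⁻¹ * (FreeGroup.of 1)⁻¹ * FreeGroup.of 0 * FreeGroup.of 1))⁻¹ *
          PresentedGroup.mk rels (FreeGroup.of 0) *
          PresentedGroup.mk rels ((FreeGroup.of 0)⁻¹ * (FreeGroup.of 1)⁻¹ * FreeGroup.of 0 * FreeGroup.of 1)
          = PresentedGroup.mk rels ((FreeGroup.of 0)⁻¹ *
            ((FreeGroup.of 0)⁻¹ * (FreeGroup.of 1)⁻¹ * FreeGroup.of 0 * FreeGroup.of 1)⁻¹ *
            FreeGroup.of 0 *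
            ((FreeGroup.of 0)⁻¹ * (FreeGroup.of 1)⁻¹ * FreeGroup.of 0 * FreeGroup.of 1)) by
        simp [map_mul, map_inv]]
      exact hrel _ (by rw [hrels]; right; right; right; left; rfl)
    have h3 : z⁻¹ * x * z = x := by
      calc z⁻¹ * x * z = x * (x⁻¹ * z⁻¹ * x * z) := by group
        _ = x * 1 := by rw [h1]
        _ = x := mul_one x
    show z * x = x * z
    have h4 : z * (z⁻¹ * x * z) = x * z := by group
    rw [h3] at h4
    exact h4
  have hzy : Commute z y := by
    have h1 : y⁻¹ * z⁻¹ * y * z = 1 := by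
      rw [hymk, hzmk]
      rw [show (PresentedGroup.mk rels (FreeGroup.of 1))⁻¹ *
          (PresentedGroup.mk rels ((FreeGroup.of 0)⁻¹ * (FreeGroup.of 1)⁻¹ * FreeGroup.of 0 * FreeGroup.of 1))⁻¹ *
          PresentedGroup.mk rels (FreeGroup.of 1) *
          PresentedGroup.mk rels ((FreeGroup.of 0)⁻¹ * (FreeGroup.of 1)⁻¹ * FreeGroup.of 0 * FreeGroup.of 1)
          = PresentedGroup.mk rels ((FreeGroup.of 1)⁻¹ *
            ((FreeGroup.of 0)⁻¹ * (FreeGroup.of 1)⁻¹ * FreeGroup.of 0 * FreeGroup.of 1)⁻¹ *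
            FreeGroup.of 1 *
            ((FreeGroup.of 0)⁻¹ * (FreeGroup.of 1)⁻¹ * FreeGroup.of 0 * FreeGroup.of 1)) by
        simp [map_mul, map_inv]]
      exact hrel _ (by rw [hrels]; right; right; right; right; rfl)
    have h3 : z⁻¹ * y * z = y := by
      calc z⁻¹ * y * z = y * (y⁻¹ * z⁻¹ * y * z) := by group
        _ = y * 1 := by rw [h1]
        _ = y := mul_one y
    show z * y = y * z
    have h4 : z * (z⁻¹ * y * z) = y * z := by group
    rw [h3] at h4
    exact h4
  -- the model homomorphism
  have hlift : ∀ w ∈ rels, FreeGroup.lift (fun idx : Fin 2 =>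
      if idx = 0 then (Heis.X : Heis (p^a) (p^b)) else Heis.Y) w = 1 := by
    intro w hw
    rw [hrels] at hw
    rcases hw with hw | hw | hw | hw | hw <;> subst hw <;>
      simp only [map_mul, map_inv, map_pow, FreeGroup.lift_apply_of, if_pos rfl, if_neg
        (by decide : (1 : Fin 2) ≠ 0), reduceIte]
    · exact Heis.X_pow
    · exact Heis.Y_pow
    · rw [Heis.comm_XY]; exact Heis.Z_pow
    · rw [Heis.comm_XY]; exact Heis.relc1
    · rw [Heis.comm_XY]; exact Heis.relc2
  set φ : PresentedGroup rels →* Heis (p^a) (p^b) := PresentedGroup.toGroup hlift with hφ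
  have hφx : φ x = Heis.X := by
    rw [hx, hφ, PresentedGroup.toGroup.of, if_pos rfl]
  have hφy : φ y = Heis.Y := by
    rw [hy, hφ, PresentedGroup.toGroup.of, if_neg (by decide : ¬ (1 : Fin 2) = 0)]
  have hφz : φ z = Heis.Z := by
    rw [hzdef, map_mul, map_mul, map_mul, map_inv, map_inv, hφx, hφy, Heis.comm_XY]
  -- fundamental power computations
  have hxzp : ∀ I : ℤ, x ^ (I * ((p^a : ℕ) : ℤ)) = 1 := by
    intro I
    rw [mul_comm, zpow_mul, zpow_natCast, hxa, one_zpow]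
  have hyzp : ∀ I : ℤ, y ^ (I * ((p^a : ℕ) : ℤ)) = 1 := by
    intro I
    rw [mul_comm, zpow_mul, zpow_natCast, hya, one_zpow]
  have hzdvd : ∀ E : ℤ, ((p^b : ℕ) : ℤ) ∣ E → z ^ E = 1 := by
    intro E hE
    obtain ⟨c, hc⟩ := hE
    rw [hc, zpow_mul, zpow_natCast, hzb, one_zpow]
  -- p^a divides the binomial coefficient
  have hchoose : (p^a : ℕ) ∣ (p^a).choose 2 := by
    have hodd' : Odd (p^a) := hodd.pow
    obtain ⟨c, hc⟩ : 2 ∣ (p^a - 1) := by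
      rcases hodd' with ⟨c, hc⟩
      exact ⟨c, by omega⟩
    refine ⟨c, ?_⟩
    rw [Nat.choose_two_right, hc, Nat.mul_div_assoc _ ⟨c, rfl⟩, Nat.mul_div_cancel_left c
      (by norm_num)]
  have hba' : ((p^b : ℕ) : ℤ) ∣ ((p^a : ℕ) : ℤ) := by
    exact_mod_cast Int.natCast_dvd_natCast.mpr (pow_dvd_pow p hba)
  -- x₁ ^ (p^a) = 1 and y₁ ^ (p^a) = 1
  have hpow_one : ∀ (I J K : ℤ), (x ^ I * y ^ J * z ^ K) ^ (p^a : ℕ) = 1 := by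
    intro I J K
    rw [st17.npowForm x y z hzdef hzx hzy]
    rw [hxzp, hyzp, one_mul, one_mul]
    apply hzdvd
    apply dvd_sub
    · exact Dvd.dvd.mul_left hba' K
    · refine Dvd.dvd.mul_left ?_ (I*J)
      exact hba'.trans (Int.natCast_dvd_natCast.mpr hchoose)
  have hx1p : x₁ ^ (p^a : ℕ) = 1 := by rw [hx1]; exact hpow_one i j k
  have hy1p : y₁ ^ (p^a : ℕ) = 1 := by rw [hy1]; exact hpow_one r s t
  -- commutator computation
  have hcomm : x₁⁻¹ * y₁⁻¹ * x₁ * y₁ = z ^ d := by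
    rw [hx1, hy1, st17.invForm x y z hzdef hzx hzy, st17.invForm x y z hzdef hzx hzy,
      st17.mulForm x y z hzdef hzx hzy, st17.mulForm x y z hzdef hzx hzy,
      st17.mulForm x y z hzdef hzx hzy]
    have e1 : -i + -r + i + r = 0 := by ring
    have e2 : -j + -s + j + s = 0 := by ring
    have e3 : -k - i * j + (-t - r * s) - -j * -r + k - (-j + -s) * i + t - (-j + -s + j) * r
        = d := by rw [hd]; ring
    rw [e1, e2, e3, zpow_zero, zpow_zero, one_mul, one_mul]
  -- order lower bounds via the model
  have hdvd_ord_x : ∀ (g : PresentedGroup rels) (I : ℤ), Heis.π₁.comp φ g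
      = Multiplicative.ofAdd ((I : ZMod (p^a))) →
      ((p^a : ℕ) : ℤ) ∣ (orderOf g : ℤ) * I := by
    intro g I hg
    have h1 : (Heis.π₁.comp φ g) ^ (orderOf g) = 1 := by
      rw [← map_pow, pow_orderOf_eq_one, map_one]
    rw [hg, ← ofAdd_nsmul] at h1
    have h2 : (orderOf g) • ((I : ZMod (p^a))) = 0 := by
      have := congrArg Multiplicative.toAdd h1
      simpa using this
    exact st17.zmod_dvd _ _ _ h2
  have hdvd_ord_y : ∀ (g : PresentedGroup rels) (I : ℤ), Heis.π₂.comp φ g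
      = Multiplicative.ofAdd ((I : ZMod (p^a))) →
      ((p^a : ℕ) : ℤ) ∣ (orderOf g : ℤ) * I := by
    intro g I hg
    have h1 : (Heis.π₂.comp φ g) ^ (orderOf g) = 1 := by
      rw [← map_pow, pow_orderOf_eq_one, map_one]
    rw [hg, ← ofAdd_nsmul] at h1
    have h2 : (orderOf g) • ((I : ZMod (p^a))) = 0 := by
      have := congrArg Multiplicative.toAdd h1
      simpa using this
    exact st17.zmod_dvd _ _ _ h2
  have hπ1X : Heis.π₁ (Heis.X : Heis (p^a) (p^b)) = Multiplicative.ofAdd 1 := rfl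
  have hπ1Y : Heis.π₁ (Heis.Y : Heis (p^a) (p^b)) = Multiplicative.ofAdd 0 := rfl
  have hπ1Z : Heis.π₁ (Heis.Z : Heis (p^a) (p^b)) = Multiplicative.ofAdd 0 := rfl
  have hπ2X : Heis.π₂ (Heis.X : Heis (p^a) (p^b)) = Multiplicative.ofAdd 0 := rfl
  have hπ2Y : Heis.π₂ (Heis.Y : Heis (p^a) (p^b)) = Multiplicative.ofAdd 1 := rfl
  have hπ2Z : Heis.π₂ (Heis.Z : Heis (p^a) (p^b)) = Multiplicative.ofAdd 0 := rfl
  have hofAdd_pow : ∀ (I : ℤ), (Multiplicative.ofAdd (1 : ZMod (p^a))) ^ I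
      = Multiplicative.ofAdd ((I : ZMod (p^a))) := by
    intro I
    rw [← ofAdd_zsmul]
    congr 1
    simp [zsmul_eq_mul]
  have hofAdd_zero_pow : ∀ (I : ℤ), (Multiplicative.ofAdd (0 : ZMod (p^a))) ^ I = 1 := by
    intro I
    rw [← ofAdd_zsmul]
    simp
  have hπ1x₁ : Heis.π₁.comp φ x₁ = Multiplicative.ofAdd ((i : ZMod (p^a))) := by
    rw [hx1]
    simp only [map_mul, map_zpow, MonoidHom.comp_apply, hφx, hφy, hφz, hπ1X, hπ1Y, hπ1Z,
      hofAdd_pow, hofAdd_zero_pow, mul_one, one_mul]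
  have hπ2x₁ : Heis.π₂.comp φ x₁ = Multiplicative.ofAdd ((j : ZMod (p^a))) := by
    rw [hx1]
    simp only [map_mul, map_zpow, MonoidHom.comp_apply, hφx, hφy, hφz, hπ2X, hπ2Y, hπ2Z,
      hofAdd_pow, hofAdd_zero_pow, mul_one, one_mul]
  have hπ1y₁ : Heis.π₁.comp φ y₁ = Multiplicative.ofAdd ((r : ZMod (p^a))) := by
    rw [hy1]
    simp only [map_mul, map_zpow, MonoidHom.comp_apply, hφx, hφy, hφz, hπ1X, hπ1Y, hπ1Z,
      hofAdd_pow, hofAdd_zero_pow, mul_one, one_mul]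
  have hπ2y₁ : Heis.π₂.comp φ y₁ = Multiplicative.ofAdd ((s : ZMod (p^a))) := by
    rw [hy1]
    simp only [map_mul, map_zpow, MonoidHom.comp_apply, hφx, hφy, hφz, hπ2X, hπ2Y, hπ2Z,
      hofAdd_pow, hofAdd_zero_pow, mul_one, one_mul]
  -- coprimality facts
  have hpint : Prime ((p : ℤ)) := Nat.prime_iff_prime_int.mp hp
  have hcop_of_not_dvd : ∀ (c : ℕ) (I : ℤ), ¬ ((p:ℤ) ∣ I) → IsCoprime (((p^c : ℕ) : ℤ)) I := by
    intro c I hI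
    have h1 : IsCoprime ((p:ℤ)) I := (Prime.coprime_iff_not_dvd hpint).mpr hI
    have h2 : IsCoprime ((p:ℤ)^c) I := h1.pow_left
    rwa [show (((p^c : ℕ)) : ℤ) = (p:ℤ)^c by push_cast; ring]
  -- general order argument
  have horder : ∀ (g : PresentedGroup rels) (I J : ℤ),
      g ^ (p^a : ℕ) = 1 →
      Heis.π₁.comp φ g = Multiplicative.ofAdd ((I : ZMod (p^a))) →
      Heis.π₂.comp φ g = Multiplicative.ofAdd ((J : ZMod (p^a))) →
      (¬ (p:ℤ) ∣ I ∨ ¬ (p:ℤ) ∣ J) → orderOf g = p ^ a := by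
    intro g I J hgp h1 h2 hIJ
    have hdvd1 : orderOf g ∣ p ^ a := orderOf_dvd_of_pow_eq_one hgp
    have hdvd2 : p ^ a ∣ orderOf g := by
      rcases hIJ with hI | hJ
      · have := (hcop_of_not_dvd a I hI).dvd_of_dvd_mul_right (hdvd_ord_x g I h1)
        exact_mod_cast Int.natCast_dvd_natCast.mp (by exact_mod_cast this)
      · have := (hcop_of_not_dvd a J hJ).dvd_of_dvd_mul_right (hdvd_ord_y g J h2)
        exact_mod_cast Int.natCast_dvd_natCast.mp (by exact_mod_cast this)
    exact Nat.dvd_antisymm hdvd1 hdvd2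
  have hij : ¬ (p:ℤ) ∣ i ∨ ¬ (p:ℤ) ∣ j := by
    by_contra h
    push_neg at h
    exact hdet (dvd_sub (h.1.mul_right s) (h.2.mul_right r))
  have hrs : ¬ (p:ℤ) ∣ r ∨ ¬ (p:ℤ) ∣ s := by
    by_contra h
    push_neg at h
    exact hdet (dvd_sub (h.2.mul_left i) (h.1.mul_left j))
  have hordx₁ : orderOf x₁ = p ^ a := horder x₁ i j hx1p hπ1x₁ hπ2x₁ hij
  have hordy₁ : orderOf y₁ = p ^ a := horder y₁ r s hy1p hπ1y₁ hπ2y₁ hrs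
  -- order of the commutator
  have hcd_up : (z ^ d) ^ (p^b : ℕ) = 1 := by
    rw [← zpow_natCast, ← zpow_mul, mul_comm, zpow_mul, zpow_natCast, hzb, one_zpow]
  have hφzd : φ (z ^ d) = Heis.ι (Multiplicative.ofAdd ((d : ZMod (p^b)))) := by
    rw [map_zpow, hφz, Heis.Z_eq, ← map_zpow]
    congr 1
    rw [← ofAdd_zsmul]
    congr 1
    simp [zsmul_eq_mul]
  have hcd_down : (p^b : ℕ) ∣ orderOf (z ^ d) := by
    have h1 : (φ (z ^ d)) ^ orderOf (z ^ d) = 1 := by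
      rw [← map_pow, pow_orderOf_eq_one, map_one]
    rw [hφzd, ← map_pow, ← ofAdd_nsmul] at h1
    have h2 : orderOf (z ^ d) • ((d : ZMod (p^b))) = 0 := by
      have h3 := congrArg Heis.c h1
      simpa [Heis.ι] using h3
    have h4 := st17.zmod_dvd (p^b) (orderOf (z ^ d)) d h2
    have h5 := (hcop_of_not_dvd b d hdet).dvd_of_dvd_mul_right h4
    exact_mod_cast Int.natCast_dvd_natCast.mp (by exact_mod_cast h5)
  have hordc : orderOf (z ^ d) = p ^ b :=
    Nat.dvd_antisymm (orderOf_dvd_of_pow_eq_one hcd_up) hcd_down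
  -- generation
  have hgen : Subgroup.closure ({x₁, y₁} : Set (PresentedGroup rels)) = ⊤ := by
    set H := Subgroup.closure ({x₁, y₁} : Set (PresentedGroup rels)) with hH
    have hx₁H : x₁ ∈ H := Subgroup.subset_closure (Set.mem_insert _ _)
    have hy₁H : y₁ ∈ H := Subgroup.subset_closure (Set.mem_insert_of_mem _ rfl)
    have hcH : z ^ d ∈ H := by
      rw [← hcomm]
      exact Subgroup.mul_mem _ (Subgroup.mul_mem _ (Subgroup.mul_mem _
        (Subgroup.inv_mem _ hx₁H) (Subgroup.inv_mem _ hy₁H)) hx₁H) hy₁H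
    have hzH : z ∈ H := by
      obtain ⟨u, v, huv⟩ := hcop_of_not_dvd b d hdet
      have : z = (z ^ d) ^ v := by
        calc z = z ^ (u * ((p^b : ℕ):ℤ) + v * d) := by rw [huv, zpow_one]
          _ = z ^ (u * ((p^b : ℕ):ℤ)) * z ^ (v * d) := by rw [zpow_add]
          _ = 1 * z ^ (v * d) := by
              rw [mul_comm u, zpow_mul, zpow_natCast, hzb, one_zpow]
          _ = (z ^ d) ^ v := by rw [one_mul, mul_comm v d, zpow_mul]
      rw [this]
      exact Subgroup.zpow_mem _ hcH v
    obtain ⟨u, v, huv⟩ := hcop_of_not_dvd a d hdet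
    have hxy_mem : ∀ (m0 n0 : ℤ) (E : ℤ) (g : PresentedGroup rels),
        g = x ^ (i * m0 + r * n0) * y ^ (j * m0 + s * n0) * z ^ E →
        g ∈ H := by
      intro m0 n0 E g hg
      obtain ⟨K1, hK1⟩ := st17.zpowForm x y z hzdef hzx hzy i j k m0
      obtain ⟨K2, hK2⟩ := st17.zpowForm x y z hzdef hzx hzy r s t n0
      have h1 : x₁ ^ m0 * y₁ ^ n0 = x ^ (i * m0 + r * n0) * y ^ (j * m0 + s * n0)
          * z ^ (K1 + K2 - (j * m0) * (r * n0)) := by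
        rw [hx1, hy1, hK1, hK2, st17.mulForm x y z hzdef hzx hzy]
      have h2 : (x₁ ^ m0 * y₁ ^ n0) * z ^ (E - (K1 + K2 - (j * m0) * (r * n0))) = g := by
        rw [h1, mul_assoc, ← zpow_add, hg,
          show K1 + K2 - (j * m0) * (r * n0) + (E - (K1 + K2 - (j * m0) * (r * n0))) = E
            from by ring]
      rw [← h2]
      exact Subgroup.mul_mem _ (Subgroup.mul_mem _ (Subgroup.zpow_mem _ hx₁H m0)
        (Subgroup.zpow_mem _ hy₁H n0)) (Subgroup.zpow_mem _ hzH _)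
    have hpow_reduce : ∀ g : PresentedGroup rels, g ^ (p^a : ℕ) = 1 →
        g ^ ((1 : ℤ) - u * ((p^a : ℕ) : ℤ)) = g := by
      intro g hg
      rw [zpow_sub, zpow_one, mul_comm, zpow_mul, zpow_natCast, hg, one_zpow, inv_one,
        mul_one]
    have hxH : x ∈ H := by
      have e1 : i * (v * s) + r * (-(v * j)) = 1 - u * ((p^a : ℕ) : ℤ) := by
        have : v * d = 1 - u * ((p^a : ℕ) : ℤ) := by rw [← huv]; ring
        rw [← this, hd]; ring
      have e2 : j * (v * s) + s * (-(v * j)) = 0 := by ring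
      have := hxy_mem (v * s) (-(v * j)) 0 (x ^ (i * (v * s) + r * (-(v * j)))
        * y ^ (j * (v * s) + s * (-(v * j))) * z ^ (0:ℤ)) rfl
      rw [e1, e2, zpow_zero, zpow_zero, mul_one, mul_one] at this
      rwa [hpow_reduce x hxa] at this
    have hyH : y ∈ H := by
      have e1 : i * (-(v * r)) + r * (v * i) = 0 := by ring
      have e2 : j * (-(v * r)) + s * (v * i) = 1 - u * ((p^a : ℕ) : ℤ) := by
        have : v * d = 1 - u * ((p^a : ℕ) : ℤ) := by rw [← huv]; ring
        rw [← this, hd]; ring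
      have := hxy_mem (-(v * r)) (v * i) 0 (x ^ (i * (-(v * r)) + r * (v * i))
        * y ^ (j * (-(v * r)) + s * (v * i)) * z ^ (0:ℤ)) rfl
      rw [e1, e2, zpow_zero, zpow_zero, mul_one, one_mul] at this
      rwa [hpow_reduce y hya] at this
    rw [eq_top_iff, ← PresentedGroup.closure_range_of rels]
    rw [Subgroup.closure_le]
    rintro g ⟨idx, rfl⟩
    fin_cases idx
    · show PresentedGroup.of (0 : Fin 2) ∈ (H : Set (PresentedGroup rels))
      rw [← hx]; exact hxH
    · show PresentedGroup.of (1 : Fin 2) ∈ (H : Set (PresentedGroup rels))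
      rw [← hy]; exact hyH
  refine ⟨hgen, hcomm, ?_, hordx₁, hordy₁⟩
  rw [hcomm, hordc]
end

section
/- Let G be a finite group generated by x and y such that Aut(G) acts transitively on ordered generating pairs and o(x) = o(y) = n. Suppose ⟨x⟩ ∩ ⟨y⟩ has order m, so that with q = n/m there is r coprime to m with y^q = x^(qr). Then m ≤ 2. -/
/-- If `Aut(G)` is transitive on generating pairs of `G = ⟨x,y⟩`, with
`o(x) = o(y) = n`, `|⟨x⟩ ∩ ⟨y⟩| = m`, `q = n/m` and `y^q = x^(qr)` with
`gcd(r,m) = 1`, then `m ≤ 2`. -/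
theorem stmt_18 (G : Type*) [Group G] [Finite G] (x y : G)
    (htrans : ∀ x₁ y₁ x₂ y₂ : G,
      Subgroup.closure ({x₁, y₁} : Set G) = ⊤ →
      Subgroup.closure ({x₂, y₂} : Set G) = ⊤ →
      ∃ σ : MulAut G, σ x₁ = x₂ ∧ σ y₁ = y₂)
    (hgen : Subgroup.closure ({x, y} : Set G) = ⊤)
    (n m q r : ℕ) (hx : orderOf x = n) (hy : orderOf y = n)
    (hm : Nat.card (↥(Subgroup.zpowers x ⊓ Subgroup.zpowers y)) = m)
    (hq : q = n / m) (hr : Nat.Coprime r m) (hyq : y ^ q = x ^ (q * r)) :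
    m ≤ 2 := by
  -- (x, y⁻¹) is also a generating pair
  have hgen' : Subgroup.closure ({x, y⁻¹} : Set G) = ⊤ := by
    rw [eq_top_iff, ← hgen]
    apply (Subgroup.closure_le _).2
    rintro z (h | h) <;> rw [h]
    · exact Subgroup.subset_closure (Or.inl rfl)
    · have : y⁻¹ ∈ Subgroup.closure ({x, y⁻¹} : Set G) :=
        Subgroup.subset_closure (Or.inr rfl)
      simpa using (Subgroup.closure ({x, y⁻¹} : Set G)).inv_mem this
  obtain ⟨σ, hσx, hσy⟩ := htrans x y x y⁻¹ hgen hgen'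
  -- apply σ to y^q = x^(qr)
  have h1 : (y⁻¹) ^ q = x ^ (q * r) := by
    have := congrArg σ hyq
    rwa [map_pow, map_pow, hσx, hσy] at this
  have h2 : x ^ (2 * (q * r)) = 1 := by
    have : x ^ (q * r) * x ^ (q * r) = y ^ q * (y⁻¹) ^ q := by rw [hyq, h1]
    rw [inv_pow, mul_inv_cancel] at this
    rw [two_mul, pow_add, this]
  have hndvd : n ∣ 2 * (q * r) := hx ▸ orderOf_dvd_of_pow_eq_one h2
  -- m divides n
  have hcard : Nat.card (Subgroup.zpowers x) = n := by
    rw [Nat.card_zpowers, hx]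
  have hmn : m ∣ n := by
    rw [← hm, ← hcard]
    exact Subgroup.card_dvd_of_le inf_le_left
  have hn0 : 0 < n := hx ▸ orderOf_pos x
  have hm0 : 0 < m := by
    rw [← hm]
    exact Nat.card_pos
  have hnqm : n = q * m := by
    rw [hq, Nat.div_mul_cancel hmn]
  have hq0 : 0 < q := by
    rcases Nat.eq_zero_or_pos q with h | h
    · rw [hnqm, h, zero_mul] at hn0; omega
    · exact h
  -- q * m ∣ q * (2 * r)
  have : q * m ∣ q * (2 * r) := by
    rw [← hnqm]
    calc n ∣ 2 * (q * r) := hndvd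
    _ = q * (2 * r) := by ring
  have hm2r : m ∣ 2 * r := (mul_dvd_mul_iff_left hq0.ne').mp this
  have : m ∣ 2 := (Nat.Coprime.dvd_of_dvd_mul_right (hr.symm)) hm2r
  exact Nat.le_of_dvd (by norm_num) this
end
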